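/- Let k ≤ n, C > 0, and v ∈ ℝⁿ with v(1) ≥ ⋯ ≥ v(n) > 0, ‖v‖₁ ≤ C, v(1) ≤ C/k, n > k. Define g₀ = Σ_{j=1}^k (v(j)+λ_j v(n)) e_j + Σ_{j=k+1}^{n−1} v(j) e_j, and for 1 ≤ t ≤ k, g_t = Σ_{j≤k, j≠t} (v(j)+λ_j v(n)) e_j + (v(t)+λ_t v(n)) e_n + Σ_{j=k+1}^{n−1} v(j) e_j. Then with y_j as defined, v = y₀ g₀ + y₁ g₁ + ⋯ + y_k g_k. -/

import Mathlib

noncomputable def eta (k : ℕ) (C : ℝ) (v : ℕ → ℝ) (j : ℕ) : ℝ := C / k - v j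

noncomputable def lam (k : ℕ) (C : ℝ) (v : ℕ → ℝ) (j : ℕ) : ℝ :=
  eta k C v j / ∑ i ∈ Finset.range k, eta k C v i

noncomputable def yy (n k : ℕ) (C : ℝ) (v : ℕ → ℝ) (j : ℕ) : ℝ :=
  lam k C v j * v (n - 1) / (v j + lam k C v j * v (n - 1))

/-- The vectors `g_t` for `t = 0, 1, …, k` (0-indexed components; `g (t+1)` zeroes
component `t` and moves `v t + λ_t v (n-1)` to the last component; `g 0` zeroes the
last component and redistributes `v (n-1)` among the first `k` components). -/
noncomputable def g (n k : ℕ) (C : ℝ) (v : ℕ → ℝ) (t : ℕ) (i : ℕ) : ℝ :=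
  if i < k then
    (if i + 1 = t then 0 else v i + lam k C v i * v (n - 1))
  else if i = n - 1 then
    (if t = 0 then 0 else v (t - 1) + lam k C v (t - 1) * v (n - 1))
  else v i

/-- `v` is the convex combination `y₀ g₀ + y₁ g₁ + ⋯ + y_k g_k`. -/
theorem convex_combination_eq
    (n k : ℕ) (hk : 0 < k) (hkn : k < n) (C : ℝ) (hC : 0 < C)
    (v : ℕ → ℝ)
    (hsort : ∀ i j, i ≤ j → j < n → v j ≤ v i)
    (hpos : ∀ i < n, 0 < v i)
    (hv1 : ∑ i ∈ Finset.range n, |v i| ≤ C)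
    (hmax : v 0 ≤ C / k) :
    ∀ i < n,
      v i = (1 - ∑ j ∈ Finset.range k, yy n k C v j) * g n k C v 0 i
              + ∑ t ∈ Finset.range k, yy n k C v t * g n k C v (t + 1) i := by
  intro i hi
  have hk0 : (k:ℝ) ≠ 0 := Nat.cast_ne_zero.mpr hk.ne'
  have hwpos : 0 < v (n-1) := hpos _ (by omega)
  have hsum : ∑ j ∈ Finset.range n, v j ≤ C :=
    le_trans (Finset.sum_le_sum fun j _ => le_abs_self _) hv1
  have hSk : ∑ j ∈ Finset.range k, v j < C := by
    have h1 : ∑ j ∈ Finset.range k, v j < ∑ j ∈ Finset.range n, v j := by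
      apply Finset.sum_lt_sum_of_subset (Finset.range_subset_range.mpr hkn.le)
        (i := n-1) (by simp; omega) (by simp; omega) hwpos
      intro j hj _
      exact (hpos j (Finset.mem_range.mp hj)).le
    linarith
  have hS : ∑ j ∈ Finset.range k, eta k C v j = C - ∑ j ∈ Finset.range k, v j := by
    simp only [eta, Finset.sum_sub_distrib, Finset.sum_const, Finset.card_range,
      nsmul_eq_mul]
    field_simp
  have hSpos : 0 < ∑ j ∈ Finset.range k, eta k C v j := by rw [hS]; linarith
  have hsumlam : ∑ t ∈ Finset.range k, lam k C v t = 1 := by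
    simp only [lam, ← Finset.sum_div]
    exact div_self hSpos.ne'
  have hlamnn : ∀ t < k, 0 ≤ lam k C v t := by
    intro t ht
    apply div_nonneg _ hSpos.le
    have h0 := hsort 0 t (by omega) (by omega)
    simp only [eta]; linarith [hmax]
  have hDpos : ∀ t < k, 0 < v t + lam k C v t * v (n-1) := by
    intro t ht
    have h1 := hpos t (by omega)
    have h2 := hlamnn t ht
    nlinarith
  have hcan : ∀ t < k, yy n k C v t * (v t + lam k C v t * v (n-1)) = lam k C v t * v (n-1) := by
    intro t ht
    unfold yy
    exact div_mul_cancel₀ _ (hDpos t ht).ne'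
  by_cases hik : i < k
  · have hD := hDpos i hik
    have hg0 : g n k C v 0 i = v i + lam k C v i * v (n-1) := by
      simp [g, hik]
    have hsum2 : ∑ t ∈ Finset.range k, yy n k C v t * g n k C v (t+1) i
        = (∑ t ∈ Finset.range k, yy n k C v t) * (v i + lam k C v i * v (n-1))
          - yy n k C v i * (v i + lam k C v i * v (n-1)) := by
      have hcong : ∀ t ∈ Finset.range k, yy n k C v t * g n k C v (t+1) i
          = yy n k C v t * (v i + lam k C v i * v (n-1))
            - (if t = i then yy n k C v t * (v i + lam k C v i * v (n-1)) else 0) := by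
        intro t ht
        by_cases h : t = i
        · subst h; simp [g, hik]
        · have hne : ¬ (i + 1 = t + 1) := by omega
          simp [g, hik, hne, h, Ne.symm h]
      rw [Finset.sum_congr rfl hcong, Finset.sum_sub_distrib,
        Finset.sum_ite_eq' (Finset.range k) i, if_pos (Finset.mem_range.mpr hik),
        ← Finset.sum_mul]
    rw [hg0, hsum2]
    linear_combination hcan i hik
  · by_cases hin : i = n - 1
    · subst hin
      have hnk : ¬ (n - 1 < k) := by omega
      have hg0 : g n k C v 0 (n-1) = 0 := by simp [g, hnk]
      have hsum2 : ∑ t ∈ Finset.range k, yy n k C v t * g n k C v (t+1) (n-1)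
          = ∑ t ∈ Finset.range k, lam k C v t * v (n-1) := by
        apply Finset.sum_congr rfl
        intro t ht
        have ht' := Finset.mem_range.mp ht
        have hgt : g n k C v (t+1) (n-1) = v t + lam k C v t * v (n-1) := by
          simp [g, hnk]
        rw [hgt]
        exact hcan t ht'
      rw [hg0, hsum2, ← Finset.sum_mul, hsumlam]
      ring
    · have hg : ∀ t, g n k C v t i = v i := by
        intro t
        simp [g, hik, hin]
      have hsum2 : ∑ t ∈ Finset.range k, yy n k C v t * g n k C v (t+1) i
          = (∑ t ∈ Finset.range k, yy n k C v t) * v i := by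
        rw [Finset.sum_mul]
        exact Finset.sum_congr rfl fun t _ => by rw [hg]
      rw [hg 0, hsum2]
      ring
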